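/- Let B be an N×N real symmetric positive definite matrix with maximal entry b_max > 0, let K ≥ 1 (possibly infinite), and suppose coefficients a_I ≥ 0 indexed by N-tuples satisfy ∑_{|I|=2k} a_I² I! ≤ c · k^q · γ^k / (2k)! for all 1 ≤ k ≤ K, with γ b_max² < 1 if K = ∞. Then the quantity Q = a_0² + ∑_{k=1}^K ∑_{|I|=2k} a_I² I! Haf(B_I)² satisfies Q ≤ a_0² + (c/√π) · Li_{1/2−q, K}(γ b_max²), where Li_{s,K}(z) = ∑_{k=1}^K z^k/k^s is the truncated polylogarithm. -/

import Mathlib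

open scoped Classical
open Real

/-- The hafnian of an `n × n` real matrix (`0` when `n` is odd, `1` for the empty matrix). -/
noncomputable def hafnian {n : ℕ} (M : Matrix (Fin n) (Fin n) ℝ) : ℝ :=
  if Even n then
    (1 / ((n / 2).factorial * 2 ^ (n / 2) : ℝ)) *
      ∑ σ : Equiv.Perm (Fin n), ∏ j : Fin (n / 2),
        M (σ ⟨2 * j.1, by have := j.2; omega⟩) (σ ⟨2 * j.1 + 1, by have := j.2; omega⟩)
  else 0

/-- An equivalence `(Σ n, Fin (I n)) ≃ Fin (∑ n, I n)` used to index repeated rows/columns. -/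
noncomputable def sigmaFinEquiv {N : ℕ} (I : Fin N → ℕ) :
    (Σ n : Fin N, Fin (I n)) ≃ Fin (∑ n, I n) :=
  Fintype.equivFinOfCardEq (by simp)

/-- The matrix `B_I` obtained from `B` by repeating row/column `n` exactly `I n` times. -/
noncomputable def repMat {N : ℕ} (B : Matrix (Fin N) (Fin N) ℝ) (I : Fin N → ℕ) :
    Matrix (Fin (∑ n, I n)) (Fin (∑ n, I n)) ℝ :=
  fun a b => B ((sigmaFinEquiv I).symm a).1 ((sigmaFinEquiv I).symm b).1

/-- The truncated polylogarithm `Li_{s,K}(z) = ∑_{1 ≤ k ≤ K} z^k / k^s` (`K ∈ ℕ∞`). -/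
noncomputable def polylog (s : ℝ) (K : ℕ∞) (z : ℝ) : ℝ :=
  ∑' k : ℕ, if 1 ≤ k ∧ (k : ℕ∞) ≤ K then z ^ k / (k : ℝ) ^ s else 0

open Matrix in
lemma entry_abs_le {N : ℕ} {B : Matrix (Fin N) (Fin N) ℝ} (hB : B.PosDef)
    {bmax : ℝ} (hub : ∀ i j, B i j ≤ bmax) (i j : Fin N) : |B i j| ≤ bmax := by
  rw [abs_le]
  refine ⟨?_, hub i j⟩
  set x : Fin N → ℝ := Pi.single i 1 + Pi.single j 1 with hx
  have hxi : (0:ℝ) < x i := by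
    simp only [hx, Pi.add_apply, Pi.single_eq_same, Pi.single_apply]
    split_ifs <;> norm_num
  have hx0 : x ≠ 0 := fun h => by simp [h] at hxi
  have hpos := hB.dotProduct_mulVec_pos hx0
  have hstar : star x = x := by simp
  rw [hstar] at hpos
  have hmv : B *ᵥ x = (fun a => B a i) + (fun a => B a j) := by
    rw [hx, Matrix.mulVec_add]
    funext a
    simp [Matrix.mulVec_single]
  rw [hmv, hx] at hpos
  have hexp : dotProduct (Pi.single i 1 + Pi.single j 1)
        ((fun a => B a i) + (fun a => B a j))
      = B i i + B i j + (B j i + B j j) := by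
    rw [add_dotProduct, dotProduct_add, dotProduct_add]
    simp [single_dotProduct]
  rw [hexp] at hpos
  have hji : B j i = B i j := by
    have := congrFun (congrFun hB.1 i) j
    simpa [Matrix.conjTranspose_apply] using this
  have h1 := hub i i
  have h2 := hub j j
  nlinarith

lemma abs_hafnian_le {n : ℕ} (M : Matrix (Fin n) (Fin n) ℝ) {b : ℝ} (hb : 0 ≤ b)
    (hM : ∀ i j, |M i j| ≤ b) :
    |hafnian M| ≤ b ^ (n / 2) * (n.factorial : ℝ) / ((n / 2).factorial * 2 ^ (n / 2)) := by
  unfold hafnian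
  split_ifs with h
  · rw [abs_mul]
    have hc : |(1 / ((n / 2).factorial * 2 ^ (n / 2) : ℝ))|
        = 1 / (((n / 2).factorial : ℝ) * 2 ^ (n / 2)) := abs_of_nonneg (by positivity)
    rw [hc]
    have hS : |∑ σ : Equiv.Perm (Fin n), ∏ j : Fin (n / 2),
        M (σ ⟨2 * j.1, by have := j.2; omega⟩) (σ ⟨2 * j.1 + 1, by have := j.2; omega⟩)|
        ≤ (n.factorial : ℝ) * b ^ (n / 2) := by
      calc |∑ σ : Equiv.Perm (Fin n), ∏ j : Fin (n / 2),
          M (σ ⟨2 * j.1, by have := j.2; omega⟩) (σ ⟨2 * j.1 + 1, by have := j.2; omega⟩)|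
          ≤ ∑ σ : Equiv.Perm (Fin n), |∏ j : Fin (n / 2),
            M (σ ⟨2 * j.1, by have := j.2; omega⟩) (σ ⟨2 * j.1 + 1, by have := j.2; omega⟩)| :=
          Finset.abs_sum_le_sum_abs _ _
        _ ≤ ∑ _σ : Equiv.Perm (Fin n), b ^ (n / 2) := by
          refine Finset.sum_le_sum fun σ _ => ?_
          rw [Finset.abs_prod]
          calc (∏ j : Fin (n / 2), |M (σ ⟨2 * j.1, by have := j.2; omega⟩)
                (σ ⟨2 * j.1 + 1, by have := j.2; omega⟩)|)
              ≤ ∏ _j : Fin (n / 2), b :=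
              Finset.prod_le_prod (fun _ _ => abs_nonneg _) (fun j _ => hM _ _)
            _ = b ^ (n / 2) := by simp
        _ = (n.factorial : ℝ) * b ^ (n / 2) := by
          simp [Finset.sum_const, Finset.card_univ, Fintype.card_perm]
    calc (1 / (((n / 2).factorial : ℝ) * 2 ^ (n / 2))) * |_|
        ≤ (1 / (((n / 2).factorial : ℝ) * 2 ^ (n / 2))) * ((n.factorial : ℝ) * b ^ (n / 2)) := by
          exact mul_le_mul_of_nonneg_left hS (by positivity)
      _ = b ^ (n / 2) * (n.factorial : ℝ) / ((n / 2).factorial * 2 ^ (n / 2)) := by ring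
  · simp only [abs_zero]
    positivity

lemma sqrt_pi_le_stirlingSeq {n : ℕ} (hn : 1 ≤ n) : Real.sqrt π ≤ Stirling.stirlingSeq n := by
  obtain ⟨m, rfl⟩ := Nat.exists_eq_add_of_le hn
  have h := Stirling.stirlingSeq'_antitone.le_of_tendsto
    (Stirling.tendsto_stirlingSeq_sqrt_pi.comp (Filter.tendsto_add_atTop_nat 1)) m
  simpa [Function.comp, Nat.add_comm] using h

lemma stirlingSeq_pos {n : ℕ} (hn : 1 ≤ n) : 0 < Stirling.stirlingSeq n := by
  obtain ⟨m, rfl⟩ := Nat.exists_eq_add_of_le hn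
  simpa [Nat.add_comm] using Stirling.stirlingSeq'_pos m

lemma central_ratio_le (k : ℕ) (hk : 1 ≤ k) :
    ((2 * k).factorial : ℝ) / (2 ^ (2 * k) * ((k.factorial : ℝ)) ^ 2)
      ≤ 1 / Real.sqrt (π * k) := by
  have hkR : (1:ℝ) ≤ (k:ℝ) := by exact_mod_cast hk
  have hk0 : (0:ℝ) < (k:ℝ) := by linarith
  have he : 0 < Real.exp 1 := Real.exp_pos 1
  set s := Stirling.stirlingSeq with hs_def
  set P : ℝ := ((k:ℝ)/Real.exp 1)^k with hP_def
  have hP : 0 < P := by positivity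
  have hsk : 0 < s k := stirlingSeq_pos hk
  have hs2k : 0 < s (2*k) := stirlingSeq_pos (by omega)
  have hsqk : 0 < Real.sqrt k := Real.sqrt_pos.mpr hk0
  have hsq4 : Real.sqrt 4 = 2 := by
    rw [show (4:ℝ) = 2^2 by norm_num, Real.sqrt_sq (by norm_num)]
  -- factorial expressions
  have hDk : (0:ℝ) < Real.sqrt (2*(k:ℝ)) * P := by positivity
  have hfk : (k.factorial : ℝ) = s k * (Real.sqrt (2*(k:ℝ)) * P) := by
    rw [hs_def, Stirling.stirlingSeq, hP_def, div_mul_cancel₀]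
    rw [← hP_def]; exact hDk.ne'
  have hf2k : ((2*k).factorial : ℝ) = s (2*k) * (2 * Real.sqrt k * (2^(2*k) * P^2)) := by
    have h1 : s (2*k) = ((2*k).factorial : ℝ) /
        (Real.sqrt (2*((2*k : ℕ):ℝ)) * (((2*k : ℕ):ℝ)/Real.exp 1)^(2*k)) := by
      rw [hs_def, Stirling.stirlingSeq]
    have hc : ((2*k : ℕ):ℝ) = 2*(k:ℝ) := by push_cast; ring
    have hden : Real.sqrt (2*((2*k : ℕ):ℝ)) * (((2*k : ℕ):ℝ)/Real.exp 1)^(2*k)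
        = 2 * Real.sqrt k * (2^(2*k) * P^2) := by
      rw [hc]
      have h2 : Real.sqrt (2*(2*(k:ℝ))) = 2 * Real.sqrt k := by
        rw [show 2*(2*(k:ℝ)) = 4 * k by ring, Real.sqrt_mul (by norm_num), hsq4]
      have h3 : ((2*(k:ℝ))/Real.exp 1)^(2*k) = 2^(2*k) * P^2 := by
        rw [show (2*(k:ℝ))/Real.exp 1 = 2 * ((k:ℝ)/Real.exp 1) by ring, mul_pow, hP_def,
          show 2*k = k*2 by ring, pow_mul]
        ring
      rw [h2, h3]
    rw [h1, hden, div_mul_cancel₀]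
    positivity
  -- rewrite LHS
  have hLHS : ((2 * k).factorial : ℝ) / (2 ^ (2 * k) * ((k.factorial : ℝ)) ^ 2)
      = s (2*k) * Real.sqrt k / (s k ^ 2 * k) := by
    rw [hf2k, hfk]
    have hsq2k : Real.sqrt (2*(k:ℝ)) ^ 2 = 2*(k:ℝ) := Real.sq_sqrt (by linarith)
    have hden : (2:ℝ)^(2*k) * (s k * (Real.sqrt (2*(k:ℝ)) * P))^2
        = 2^(2*k) * (s k^2 * (2*(k:ℝ)) * P^2) := by
      rw [mul_pow, mul_pow, hsq2k]; ring
    rw [hden, div_eq_div_iff (by positivity) (by positivity)]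
    ring
  rw [hLHS]
  have hsqpi : 0 < Real.sqrt π := Real.sqrt_pos.mpr Real.pi_pos
  have hkey : Real.sqrt π * s (2*k) ≤ s k ^ 2 := by
    have h1 : Real.sqrt π ≤ s k := sqrt_pi_le_stirlingSeq hk
    have h2 : s (2*k) ≤ s k := by
      have := Stirling.stirlingSeq'_antitone (show k - 1 ≤ 2*k - 1 by omega)
      simpa [Function.comp, Nat.succ_eq_add_one, Nat.sub_add_cancel hk,
        Nat.sub_add_cancel (show 1 ≤ 2*k by omega)] using this
    nlinarith
  rw [Real.sqrt_mul Real.pi_pos.le, div_le_div_iff₀ (by positivity) (by positivity)]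
  have hsqk2 : Real.sqrt k * Real.sqrt k = (k:ℝ) := Real.mul_self_sqrt hk0.le
  nlinarith [hkey, hsqk, hsqpi, hs2k, hsk, hk0]

/-- Under the coefficient decay hypothesis `∑_{|I|=2k} a_I² I! ≤ c k^q γ^k/(2k)!`
(for `1 ≤ k ≤ K`, with `γ b_max² < 1` when `K = ∞`), the quantity
`Q = a_0² + ∑_{k=1}^K ∑_{|I|=2k} a_I² I! Haf(B_I)²` satisfies
`Q ≤ a_0² + (c/√π) Li_{1/2-q,K}(γ b_max²)`. -/
theorem gbs_importance_second_moment_bound (N : ℕ) (hN : 0 < N)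
    (B : Matrix (Fin N) (Fin N) ℝ) (hB : B.PosDef)
    (bmax : ℝ) (hbmax_pos : 0 < bmax) (hbmax_ub : ∀ i j, B i j ≤ bmax)
    (hbmax_mem : ∃ i j, B i j = bmax)
    (K : ℕ∞) (hK : 1 ≤ K)
    (a : (Fin N → ℕ) → ℝ) (ha : ∀ I, 0 ≤ a I)
    (c q γ : ℝ) (hc : 0 < c)
    (hbound : ∀ k : ℕ, 1 ≤ k → (k : ℕ∞) ≤ K →
      ∑ I ∈ Finset.Nat.antidiagonalTuple N (2 * k),
          (a I) ^ 2 * ∏ n, ((I n).factorial : ℝ)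
        ≤ c * (k : ℝ) ^ q * γ ^ k / ((2 * k).factorial : ℝ))
    (hconv : K = ⊤ → γ * bmax ^ 2 < 1) :
    (a (fun _ => 0)) ^ 2
        + ∑' k : ℕ, (if 1 ≤ k ∧ (k : ℕ∞) ≤ K then
            ∑ I ∈ Finset.Nat.antidiagonalTuple N (2 * k),
              (a I) ^ 2 * (∏ n, ((I n).factorial : ℝ)) * (hafnian (repMat B I)) ^ 2
          else 0)
      ≤ (a (fun _ => 0)) ^ 2 + (c / Real.sqrt π) * polylog (1 / 2 - q) K (γ * bmax ^ 2) := by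
  set z : ℝ := γ * bmax ^ 2 with hz_def
  -- γ is nonnegative
  have hγ : 0 ≤ γ := by
    have h1 := hbound 1 le_rfl (by simpa using hK)
    have h2 : (0:ℝ) ≤ ∑ I ∈ Finset.Nat.antidiagonalTuple N (2 * 1),
        (a I) ^ 2 * ∏ n, ((I n).factorial : ℝ) := by
      refine Finset.sum_nonneg fun I _ => mul_nonneg (sq_nonneg _) ?_
      exact Finset.prod_nonneg fun n _ => Nat.cast_nonneg _
    push_cast at h1
    rw [Real.one_rpow] at h1
    norm_num at h1
    nlinarith [h2.trans h1]
  have hz : 0 ≤ z := by positivity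
  have hsqpi : 0 < Real.sqrt π := Real.sqrt_pos.mpr Real.pi_pos
  have hC : 0 ≤ c / Real.sqrt π := by positivity
  -- nonnegativity of LHS summand
  set f : ℕ → ℝ := fun k => if 1 ≤ k ∧ (k : ℕ∞) ≤ K then
      ∑ I ∈ Finset.Nat.antidiagonalTuple N (2 * k),
        (a I) ^ 2 * (∏ n, ((I n).factorial : ℝ)) * (hafnian (repMat B I)) ^ 2
    else 0 with hf_def
  set g : ℕ → ℝ := fun k => if 1 ≤ k ∧ (k : ℕ∞) ≤ K then
      c / Real.sqrt π * (z ^ k / (k : ℝ) ^ ((1:ℝ) / 2 - q)) else 0 with hg_def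
  have hf_nonneg : ∀ k, 0 ≤ f k := by
    intro k
    simp only [hf_def]
    split_ifs with h
    · refine Finset.sum_nonneg fun I _ => mul_nonneg (mul_nonneg (sq_nonneg _) ?_) (sq_nonneg _)
      exact Finset.prod_nonneg fun n _ => Nat.cast_nonneg _
    · exact le_refl _
  -- key pointwise bound
  have hfg : ∀ k, f k ≤ g k := by
    intro k
    simp only [hf_def, hg_def]
    split_ifs with hcond
    · obtain ⟨hk1, hkK⟩ := hcond
      have hkR : (1:ℝ) ≤ (k:ℝ) := by exact_mod_cast hk1
      have hk0 : (0:ℝ) < (k:ℝ) := by linarith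
      have hF2 : (0:ℝ) < ((2*k).factorial : ℝ) := by exact_mod_cast (2*k).factorial_pos
      have hFk : (0:ℝ) < (k.factorial : ℝ) := by exact_mod_cast k.factorial_pos
      set H : ℝ := bmax ^ k * ((2*k).factorial : ℝ) / (k.factorial * 2 ^ k) with hH_def
      have hHaf : ∀ I ∈ Finset.Nat.antidiagonalTuple N (2 * k),
          (hafnian (repMat B I)) ^ 2 ≤ H ^ 2 := by
        intro I hI
        have hsum : ∑ n, I n = 2 * k := (Finset.Nat.mem_antidiagonalTuple.mp hI)
        have hM : ∀ a b, |repMat B I a b| ≤ bmax := by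
          intro a b
          simp only [repMat]
          exact entry_abs_le hB hbmax_ub _ _
        have h := abs_hafnian_le (repMat B I) hbmax_pos.le hM
        have h' : |hafnian (repMat B I)| ≤ H := by
          refine h.trans (le_of_eq ?_)
          rw [hsum, show 2*k/2 = k from by omega, hH_def]
        calc (hafnian (repMat B I)) ^ 2 = |hafnian (repMat B I)| ^ 2 := (sq_abs _).symm
          _ ≤ H ^ 2 := pow_le_pow_left₀ (abs_nonneg _) h' 2
      have step1 : (∑ I ∈ Finset.Nat.antidiagonalTuple N (2 * k),
            (a I) ^ 2 * (∏ n, ((I n).factorial : ℝ)) * (hafnian (repMat B I)) ^ 2)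
          ≤ (∑ I ∈ Finset.Nat.antidiagonalTuple N (2 * k),
            (a I) ^ 2 * (∏ n, ((I n).factorial : ℝ))) * H ^ 2 := by
        rw [Finset.sum_mul]
        refine Finset.sum_le_sum fun I hI => ?_
        refine mul_le_mul_of_nonneg_left (hHaf I hI) ?_
        exact mul_nonneg (sq_nonneg _) (Finset.prod_nonneg fun n _ => Nat.cast_nonneg _)
      have step2 : (∑ I ∈ Finset.Nat.antidiagonalTuple N (2 * k),
            (a I) ^ 2 * (∏ n, ((I n).factorial : ℝ))) * H ^ 2
          ≤ (c * (k:ℝ) ^ q * γ ^ k / ((2 * k).factorial : ℝ)) * H ^ 2 :=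
        mul_le_mul_of_nonneg_right (hbound k hk1 hkK) (sq_nonneg _)
      have hkq : (0:ℝ) < (k:ℝ) ^ q := Real.rpow_pos_of_pos hk0 q
      have step3 : (c * (k:ℝ) ^ q * γ ^ k / ((2 * k).factorial : ℝ)) * H ^ 2
          = c * (k:ℝ) ^ q * z ^ k *
            (((2 * k).factorial : ℝ) / (2 ^ (2 * k) * ((k.factorial : ℝ)) ^ 2)) := by
        rw [hH_def, hz_def]
        field_simp
        ring
      have step4 : c * (k:ℝ) ^ q * z ^ k *
            (((2 * k).factorial : ℝ) / (2 ^ (2 * k) * ((k.factorial : ℝ)) ^ 2))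
          ≤ c * (k:ℝ) ^ q * z ^ k * (1 / Real.sqrt (π * k)) := by
        refine mul_le_mul_of_nonneg_left (central_ratio_le k hk1) ?_
        positivity
      have step5 : c * (k:ℝ) ^ q * z ^ k * (1 / Real.sqrt (π * k))
          = c / Real.sqrt π * (z ^ k / (k:ℝ) ^ ((1:ℝ) / 2 - q)) := by
        have hsqk : 0 < Real.sqrt k := Real.sqrt_pos.mpr hk0
        have h1 : (k:ℝ) ^ ((1:ℝ) / 2 - q) = Real.sqrt k / (k:ℝ) ^ q := by
          rw [Real.rpow_sub hk0, Real.sqrt_eq_rpow]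
        rw [h1, Real.sqrt_mul Real.pi_pos.le]
        rw [div_div_eq_mul_div]
        field_simp
      calc (∑ I ∈ Finset.Nat.antidiagonalTuple N (2 * k),
            (a I) ^ 2 * (∏ n, ((I n).factorial : ℝ)) * (hafnian (repMat B I)) ^ 2)
          ≤ _ := step1
        _ ≤ _ := step2
        _ = _ := step3
        _ ≤ _ := step4
        _ = _ := step5
    · exact le_refl _
  -- summability of g
  have hg_nonneg : ∀ k, 0 ≤ g k := by
    intro k
    simp only [hg_def]
    split_ifs with h
    · have hk0 : (0:ℝ) < (k:ℝ) := by exact_mod_cast h.1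
      positivity
    · exact le_refl _
  have hg_summable : Summable g := by
    rcases eq_or_ne K ⊤ with hKtop | hKtop
    · -- infinite case
      have hz1 : z < 1 := hconv hKtop
      set m : ℕ := ⌈q⌉₊ with hm_def
      have hmaj : Summable (fun k : ℕ => (c / Real.sqrt π) * ((k:ℝ) ^ m * z ^ k)) := by
        refine Summable.mul_left _ ?_
        refine summable_pow_mul_geometric_of_norm_lt_one m ?_
        rw [Real.norm_eq_abs, abs_of_nonneg hz]
        exact hz1
      refine Summable.of_nonneg_of_le hg_nonneg (fun k => ?_) hmaj
      simp only [hg_def]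
      split_ifs with h
      · have hk1 : 1 ≤ k := h.1
        have hkR : (1:ℝ) ≤ (k:ℝ) := by exact_mod_cast hk1
        have hk0 : (0:ℝ) < (k:ℝ) := by linarith
        have h1 : z ^ k / (k:ℝ) ^ ((1:ℝ) / 2 - q) = z ^ k * (k:ℝ) ^ (q - (1:ℝ)/2) := by
          rw [div_eq_mul_inv, ← Real.rpow_neg hk0.le]
          norm_num
        have h2 : (k:ℝ) ^ (q - (1:ℝ)/2) ≤ (k:ℝ) ^ (m:ℝ) := by
          refine Real.rpow_le_rpow_of_exponent_le hkR ?_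
          have := Nat.le_ceil q
          rw [hm_def]
          push_cast at this ⊢
          linarith
        rw [h1]
        have h3 : z ^ k * (k:ℝ) ^ (q - (1:ℝ)/2) ≤ z ^ k * (k:ℝ) ^ (m:ℝ) :=
          mul_le_mul_of_nonneg_left h2 (by positivity)
        calc c / Real.sqrt π * (z ^ k * (k:ℝ) ^ (q - (1:ℝ)/2))
            ≤ c / Real.sqrt π * (z ^ k * (k:ℝ) ^ (m:ℝ)) := mul_le_mul_of_nonneg_left h3 hC
          _ = c / Real.sqrt π * ((k:ℝ) ^ m * z ^ k) := by rw [Real.rpow_natCast]; ring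
      · positivity
    · -- finite case
      lift K to ℕ using hKtop with n hn
      refine summable_of_ne_finset_zero (s := Finset.range (n+1)) fun k hk => ?_
      simp only [Finset.mem_range, not_lt] at hk
      simp only [hg_def]
      rw [if_neg]
      rintro ⟨-, h2⟩
      rw [Nat.cast_le] at h2
      omega
  have hf_summable : Summable f := Summable.of_nonneg_of_le hf_nonneg hfg hg_summable
  refine add_le_add_right ?_ _
  rw [polylog, ← tsum_mul_left]
  refine (hf_summable.tsum_le_tsum hfg ?_).trans (le_of_eq ?_)
  · exact hg_summable
  · refine tsum_congr fun k => ?_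
    simp only [hg_def, mul_ite, mul_zero]
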